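/- Let c ∈ ℂ, R = ℂ[t, t^{-1}, u | u² = t⁴ − 2ct² + 1], and let σ be the ℂ-algebra automorphism of R with σ(t) = t^{-1}, σ(u) = t^{-2}u. The ℂ-linear map induced by σ on Ω¹_R/dR (sending the class of f dg to the class of σ(f) d(σ(g))) satisfies: σ(ω₀) = −ω₀, σ(ω_{−1}) = −ω_{−3}, σ(ω_{−2}) = −ω_{−2}, σ(ω_{−3}) = −ω_{−1}, and σ(ω_{−4}) = −ω_{−4}. -/

import Mathlib

noncomputable section
open Polynomial LaurentPolynomial

/-- The ring `R = ℂ[t,t⁻¹][u]/(u² − (t⁴ − 2ct² + 1))`, realized by adjoining a root `u`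
of `X² − (t⁴ − 2ct² + 1)` to the ring of Laurent polynomials `ℂ[t,t⁻¹]`. -/
abbrev DJKM (c : ℂ) : Type :=
  AdjoinRoot ((X : Polynomial (LaurentPolynomial ℂ)) ^ 2 -
    Polynomial.C (T 4 - 2 * LaurentPolynomial.C c * T 2 + 1))

/-- The element `t^i` of `R`, for `i : ℤ`. -/
def tp (c : ℂ) (i : ℤ) : DJKM c := AdjoinRoot.of _ (T i)

/-- The element `u` of `R`. -/
def uu (c : ℂ) : DJKM c := AdjoinRoot.root _

/-- The subspace `dR ⊆ Ω¹_R` of exact differentials. -/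
def dR (c : ℂ) : Submodule ℂ (KaehlerDifferential ℂ (DJKM c)) :=
  LinearMap.range (KaehlerDifferential.D ℂ (DJKM c)).toLinearMap

/-- The class of `f·dg` in `Ω¹_R/dR`. -/
def cls (c : ℂ) (f g : DJKM c) : KaehlerDifferential ℂ (DJKM c) ⧸ dR c :=
  Submodule.Quotient.mk (f • KaehlerDifferential.D ℂ (DJKM c) g)

/-- `ω_k` : the class of `t^k·u·dt` in `Ω¹_R/dR`. -/
def w (c : ℂ) (k : ℤ) : KaehlerDifferential ℂ (DJKM c) ⧸ dR c :=
  cls c (tp c k * uu c) (tp c 1)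

/-- `ω₀` : the class of `t⁻¹·dt` in `Ω¹_R/dR`. -/
def w0 (c : ℂ) : KaehlerDifferential ℂ (DJKM c) ⧸ dR c :=
  cls c (tp c (-1)) (tp c 1)

variable (c : ℂ)

lemma tp_mul (i j : ℤ) : tp c i * tp c j = tp c (i + j) := by
  rw [tp, tp, tp, ← map_mul, ← LaurentPolynomial.T_add]

lemma tp_zero : tp c 0 = 1 := by
  rw [tp, LaurentPolynomial.T_zero, map_one]

lemma cc_eq : algebraMap ℂ (DJKM c) c = AdjoinRoot.of _ (LaurentPolynomial.C c) := by
  rw [IsScalarTower.algebraMap_apply ℂ (LaurentPolynomial ℂ) (DJKM c)]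
  rfl

lemma uu_sq : uu c * uu c = tp c 4 - 2 * algebraMap ℂ (DJKM c) c * tp c 2 + 1 := by
  have h := AdjoinRoot.mk_self (f := (X : Polynomial (LaurentPolynomial ℂ)) ^ 2 -
      Polynomial.C (T 4 - 2 * LaurentPolynomial.C c * T 2 + 1))
  rw [map_sub, map_pow, AdjoinRoot.mk_X, sub_eq_zero] at h
  rw [show uu c * uu c = uu c ^ 2 by ring, uu, h, AdjoinRoot.mk_C, map_add, map_sub,
    map_mul, map_mul, map_one, cc_eq, tp, tp]
  rw [map_ofNat]

lemma tp_smul_c (i : ℤ) (z : ℂ) (x : KaehlerDifferential ℂ (DJKM c)) :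
    tp c i • z • x = z • tp c i • x := smul_comm _ _ _

lemma tu_smul_c (i : ℤ) (z : ℂ) (x : KaehlerDifferential ℂ (DJKM c)) :
    (tp c i * uu c) • z • x = z • (tp c i * uu c) • x := smul_comm _ _ _

lemma ttop (i j : ℤ) (x : KaehlerDifferential ℂ (DJKM c)) :
    tp c i • tp c j • x = tp c (i + j) • x := by rw [smul_smul, tp_mul]

lemma tut (i j : ℤ) (x : KaehlerDifferential ℂ (DJKM c)) :
    (tp c i * uu c) • tp c j • x = (tp c (i + j) * uu c) • x := by
  rw [smul_smul]
  congr 1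
  rw [mul_right_comm, tp_mul]

lemma t_tu (i j : ℤ) (x : KaehlerDifferential ℂ (DJKM c)) :
    tp c i • (tp c j * uu c) • x = (tp c (i + j) * uu c) • x := by
  rw [smul_smul, ← mul_assoc, tp_mul]

local notation "Dd" => KaehlerDifferential.D ℂ (DJKM c)

lemma uu_sq' : uu c * uu c = tp c 4 - (2*c) • tp c 2 + 1 := by
  rw [uu_sq, Algebra.smul_def, map_mul, map_ofNat]

lemma D_tp (n : ℤ) : Dd (tp c n) = ((n:ℂ)) • (tp c (n-1) • Dd (tp c 1)) := by
  have hneg1 : Dd (tp c (-1)) = ((-1:ℂ)) • (tp c (-2) • Dd (tp c 1)) := by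
    have h0 : Dd (tp c (-1) * tp c 1) = 0 := by
      rw [tp_mul, show (-1 + 1 : ℤ) = 0 by ring, tp_zero, Derivation.map_one_eq_zero]
    rw [Derivation.leibniz] at h0
    have h1 := congrArg (fun z => tp c (-1) • z) h0
    simp only [smul_add, smul_smul, tp_mul, show (-1 + 1 : ℤ) = 0 by ring, tp_zero,
      one_smul, smul_zero, show (-1 + -1 : ℤ) = -2 by ring] at h1
    have h2 : Dd (tp c (-1)) = -(tp c (-2) • Dd (tp c 1)) := by
      have := eq_neg_of_add_eq_zero_right h1
      rw [this]
    rw [h2, neg_one_smul]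
  induction n using Int.induction_on with
  | zero => simp [tp_zero]
  | succ i ih =>
    have : tp c ((i:ℤ) + 1) = tp c i * tp c 1 := (tp_mul c i 1).symm
    rw [this, Derivation.leibniz, ih, smul_comm, smul_smul, tp_mul,
      show (1 + ((i:ℤ)-1)) = (i:ℤ) by ring, show ((i:ℤ)+1-1) = (i:ℤ) by ring]
    push_cast
    module
  | pred i ih =>
    have : tp c (-(i:ℤ) - 1) = tp c (-i) * tp c (-1) := by
      rw [tp_mul, show (-(i:ℤ) + -1) = -(i:ℤ) - 1 by ring]
    rw [this, Derivation.leibniz, ih, hneg1, tp_smul_c, tp_smul_c, ttop, ttop,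
      show ((-(i:ℤ)) + -2) = -(i:ℤ)-1-1 by ring,
      show ((-1:ℤ) + (-(i:ℤ)-1)) = -(i:ℤ)-1-1 by ring]
    push_cast
    module

lemma uu_du : uu c • Dd (uu c) = (2:ℂ) • (tp c 3 • Dd (tp c 1)) - (2*c) • (tp c 1 • Dd (tp c 1)) := by
  have hL := Derivation.leibniz Dd (uu c) (uu c)
  rw [uu_sq'] at hL
  simp only [map_add, map_sub, Derivation.map_smul, Derivation.map_one_eq_zero, add_zero,
    D_tp c 4, D_tp c 2, show ((4:ℤ)-1) = 3 by norm_num, show ((2:ℤ)-1) = 1 by norm_num] at hL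
  refine smul_right_injective (KaehlerDifferential ℂ (DJKM c)) (two_ne_zero (α := ℂ)) ?_
  show (2:ℂ) • _ = (2:ℂ) • _
  rw [two_smul, ← hL]
  match_scalars <;> push_cast [map_ofNat] <;> ring

lemma uu_smul_c (z : ℂ) (x : KaehlerDifferential ℂ (DJKM c)) :
    uu c • z • x = z • uu c • x := smul_comm _ _ _

lemma u_t (j : ℤ) (x : KaehlerDifferential ℂ (DJKM c)) :
    uu c • tp c j • x = (tp c j * uu c) • x := by
  rw [smul_smul]
  congr 1
  exact mul_comm _ _

lemma key (k : ℤ) : cls c (tp c k * uu c) (tp c (-1)) = - w c (k - 2) := by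
  unfold w cls
  rw [D_tp c (-1), show ((-1:ℤ)-1) = -2 by norm_num, tu_smul_c, tut,
    show (k + -2) = k - 2 by ring, show ((-1:ℤ):ℂ) = -1 by norm_num, neg_one_smul,
    Submodule.Quotient.mk_neg]

lemma w0key : cls c (tp c 1) (tp c (-1)) = - w0 c := by
  unfold w0 cls
  rw [D_tp c (-1), show ((-1:ℤ)-1) = -2 by norm_num, tp_smul_c, ttop,
    show ((1:ℤ) + -2) = -1 by norm_num, show ((-1:ℤ):ℂ) = -1 by norm_num, neg_one_smul,
    Submodule.Quotient.mk_neg]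

lemma w04 : w c 0 = w c (-4) := by
  unfold w cls
  rw [Submodule.Quotient.eq]
  have hq : tp c 1 - (2*c) • tp c (-1) + tp c (-3) = tp c (-3) * uu c * uu c := by
    calc tp c 1 - (2*c) • tp c (-1) + tp c (-3)
        = tp c (-3) * (tp c 4 - (2*c) • tp c 2 + 1) := by
          simp only [mul_add, mul_sub, mul_one, mul_smul_comm, tp_mul,
            show ((-3:ℤ)+4) = 1 by norm_num, show ((-3:ℤ)+2) = -1 by norm_num]
      _ = tp c (-3) * (uu c * uu c) := by rw [uu_sq']
      _ = tp c (-3) * uu c * uu c := (mul_assoc _ _ _).symm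
  have hmem : (3:ℂ) • ((tp c 0 * uu c) • Dd (tp c 1) - (tp c (-4) * uu c) • Dd (tp c 1)) =
      Dd ((tp c 1 - (2*c) • tp c (-1) + tp c (-3)) * uu c) := by
    rw [Derivation.leibniz]
    simp only [map_add, map_sub, Derivation.map_smul, D_tp c (-1), D_tp c (-3),
      show ((-1:ℤ)-1) = -2 by norm_num, show ((-3:ℤ)-1) = -4 by norm_num]
    rw [hq, mul_smul (tp c (-3) * uu c) (uu c), uu_du]
    simp only [smul_add, smul_sub, uu_smul_c, tu_smul_c, tut, u_t, tp_zero, one_mul,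
      show ((-3:ℤ)+3) = 0 by norm_num, show ((-3:ℤ)+1) = -2 by norm_num]
    match_scalars <;> push_cast [map_ofNat] <;> ring
  have hd : Dd ((tp c 1 - (2*c) • tp c (-1) + tp c (-3)) * uu c) ∈ dR c :=
    ⟨(tp c 1 - (2*c) • tp c (-1) + tp c (-3)) * uu c, rfl⟩
  have h2 := Submodule.smul_mem (dR c) (3⁻¹:ℂ) hd
  rw [← hmem, inv_smul_smul₀ (by norm_num : (3:ℂ) ≠ 0)] at h2
  exact h2

/-- The `ℂ`-linear map induced on `Ω¹_R/dR` by the automorphism `σ` of `R` with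
`σ(t) = t⁻¹`, `σ(u) = t⁻²u` (i.e. sending the class of `f·dg` to the class of `σ(f)·d(σ(g))`)
satisfies `σ(ω₀) = −ω₀`, `σ(ω₋₁) = −ω₋₃`, `σ(ω₋₂) = −ω₋₂`, `σ(ω₋₃) = −ω₋₁`, `σ(ω₋₄) = −ω₋₄`. -/
theorem stmt5 (c : ℂ) (σ : DJKM c ≃ₐ[ℂ] DJKM c)
    (hσt : σ (tp c 1) = tp c (-1)) (hσu : σ (uu c) = tp c (-2) * uu c)
    (τ : (KaehlerDifferential ℂ (DJKM c) ⧸ dR c) →ₗ[ℂ] (KaehlerDifferential ℂ (DJKM c) ⧸ dR c))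
    (hτ : ∀ f g : DJKM c, τ (cls c f g) = cls c (σ f) (σ g)) :
    τ (w0 c) = -w0 c ∧ τ (w c (-1)) = -w c (-3) ∧ τ (w c (-2)) = -w c (-2) ∧
      τ (w c (-3)) = -w c (-1) ∧ τ (w c (-4)) = -w c (-4) := by
  have hinv : tp c (-1) * tp c 1 = 1 := by
    rw [tp_mul, show (-1+1:ℤ) = 0 by norm_num, tp_zero]
  have hs1 : σ (tp c (-1)) = tp c 1 := by
    have h2 : σ (tp c (-1)) * tp c (-1) = 1 := by
      have h := congrArg σ hinv
      rw [map_mul, map_one, hσt] at h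
      exact h
    calc σ (tp c (-1)) = σ (tp c (-1)) * (tp c (-1) * tp c 1) := by rw [hinv, mul_one]
      _ = σ (tp c (-1)) * tp c (-1) * tp c 1 := (mul_assoc _ _ _).symm
      _ = tp c 1 := by rw [h2, one_mul]
  have s2 : σ (tp c (-2)) = tp c 2 := by
    rw [show (-2:ℤ) = -1 + -1 by norm_num, ← tp_mul, map_mul, hs1, tp_mul,
      show ((1:ℤ)+1) = 2 by norm_num]
  have s3 : σ (tp c (-3)) = tp c 3 := by
    rw [show (-3:ℤ) = -2 + -1 by norm_num, ← tp_mul, map_mul, hs1, s2, tp_mul,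
      show ((2:ℤ)+1) = 3 by norm_num]
  have s4 : σ (tp c (-4)) = tp c 4 := by
    rw [show (-4:ℤ) = -3 + -1 by norm_num, ← tp_mul, map_mul, hs1, s3, tp_mul,
      show ((3:ℤ)+1) = 4 by norm_num]
  have e1 : σ (tp c (-1) * uu c) = tp c (-1) * uu c := by
    rw [map_mul, hs1, hσu, ← mul_assoc, tp_mul, show ((1:ℤ) + -2) = -1 by norm_num]
  have e2 : σ (tp c (-2) * uu c) = tp c 0 * uu c := by
    rw [map_mul, s2, hσu, ← mul_assoc, tp_mul, show ((2:ℤ) + -2) = 0 by norm_num]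
  have e3 : σ (tp c (-3) * uu c) = tp c 1 * uu c := by
    rw [map_mul, s3, hσu, ← mul_assoc, tp_mul, show ((3:ℤ) + -2) = 1 by norm_num]
  have e4 : σ (tp c (-4) * uu c) = tp c 2 * uu c := by
    rw [map_mul, s4, hσu, ← mul_assoc, tp_mul, show ((4:ℤ) + -2) = 2 by norm_num]
  refine ⟨?_, ?_, ?_, ?_, ?_⟩
  · show τ (cls c (tp c (-1)) (tp c 1)) = _
    rw [hτ, hσt, hs1, w0key]
  · show τ (cls c (tp c (-1) * uu c) (tp c 1)) = _
    rw [hτ, hσt, e1]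
    have h := key c (-1)
    norm_num at h
    exact h
  · show τ (cls c (tp c (-2) * uu c) (tp c 1)) = _
    rw [hτ, hσt, e2]
    have h := key c 0
    norm_num at h
    exact h
  · show τ (cls c (tp c (-3) * uu c) (tp c 1)) = _
    rw [hτ, hσt, e3]
    have h := key c 1
    norm_num at h
    exact h
  · show τ (cls c (tp c (-4) * uu c) (tp c 1)) = _
    rw [hτ, hσt, e4]
    have h := key c 2
    norm_num at h
    rw [h, w04]
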